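/- For integers ℓ ≥ 1 and q ≥ 0, let W be a walk in the graph G_{ℓ,q} from s to t that visits every node of G_{ℓ,q} at least once. Then there do not exist two edges of the top path and two edges of the bottom path each of which is traversed by W at most once; equivalently, for the top path or for the bottom path, all but at most one of its ℓ edges are traversed by W at least twice. -/

import Mathlib

open Finset

namespace TSPGap


/-! ### Lovász–Schrijver lift-and-project operators -/

/-- `cone(R) = {(λ, λx) : λ ≥ 0, x ∈ R}`, with the extra 0th coordinate first. -/
def lsCone {ι : Type*} (R : Set (ι → ℝ)) : Set (ℝ × (ι → ℝ)) :=
  {p | ∃ c : ℝ, ∃ y ∈ R, 0 ≤ c ∧ p.1 = c ∧ p.2 = fun i => c * y i}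

/-- `X` is a protection matrix witnessing `x ∈ N(R)`: it is symmetric, its 0th row and
diagonal both equal `(1, x)`, and each row `X_i` and difference `X_0 - X_i` lies in `cone(R)`. -/
def IsProtection {ι : Type*} (R : Set (ι → ℝ)) (x : ι → ℝ)
    (X : Option ι → Option ι → ℝ) : Prop :=
  (∀ i j, X i j = X j i) ∧
  X none none = 1 ∧
  (∀ i, X none (some i) = x i) ∧
  (∀ i, X (some i) (some i) = x i) ∧
  (∀ i, (X (some i) none, fun j => X (some i) (some j)) ∈ lsCone R) ∧
  (∀ i, (X none none - X (some i) none,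
         fun j => X none (some j) - X (some i) (some j)) ∈ lsCone R)

/-- The Lovász–Schrijver `N` operator. -/
def lsN {ι : Type*} (R : Set (ι → ℝ)) : Set (ι → ℝ) :=
  {x | ∃ X : Option ι → Option ι → ℝ, IsProtection R x X}

/-- The Lovász–Schrijver `N₊` operator (protection matrix additionally PSD). -/
def lsNplus {ι : Type*} [Fintype ι] (R : Set (ι → ℝ)) : Set (ι → ℝ) :=
  {x | ∃ X : Matrix (Option ι) (Option ι) ℝ, X.PosSemidef ∧
        IsProtection R x (fun i j => X i j)}

/-! ### Directed graphs -/

variable {V : Type*} [DecidableEq V]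

/-- The list of (directed) steps of a walk given by its list of vertices. -/
def dSteps (l : List V) : List (V × V) := l.zip l.tail

/-- The steps of a closed walk given by its list of vertices. -/
def cycSteps (l : List V) : List (V × V) := l.zip (l.rotate 1)

/-- `l` is a directed walk from `u` to `v` using edges of `E`. -/
def IsDWalk (E : Finset (V × V)) (u v : V) (l : List V) : Prop :=
  l.head? = some u ∧ l.getLast? = some v ∧ ∀ a ∈ dSteps l, a ∈ E

/-- Total weight of a walk. -/
def dWalkWeight (w : V × V → ℝ) (l : List V) : ℝ := ((dSteps l).map w).sum

/-- Shortest-path distance from `u` to `v` in the weighted directed graph `(E, w)`. -/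
noncomputable def dDist (E : Finset (V × V)) (w : V × V → ℝ) (u v : V) : ℝ :=
  sInf {c | ∃ l : List V, IsDWalk E u v l ∧ dWalkWeight w l = c}

/-- `x(δ⁺(S))`. -/
def outCut (E : Finset (V × V)) (x : ↥E → ℝ) (S : Finset V) : ℝ :=
  ∑ e ∈ E.attach.filter (fun e => e.val.1 ∈ S ∧ e.val.2 ∉ S), x e

/-- `x(δ⁻(S))`. -/
def inCut (E : Finset (V × V)) (x : ↥E → ℝ) (S : Finset V) : ℝ :=
  ∑ e ∈ E.attach.filter (fun e => e.val.1 ∉ S ∧ e.val.2 ∈ S), x e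

/-- `d · x = ∑_e d_e x_e` over the edge set `E`. -/
def dDot (E : Finset (V × V)) (d : V × V → ℝ) (x : ↥E → ℝ) : ℝ :=
  ∑ e ∈ E.attach, d e.val * x e

/-- The balanced asymmetric tour polytope of the directed graph with node set `VS`
and edge set `E`. -/
def ATbal (VS : Finset V) (E : Finset (V × V)) : Set (↥E → ℝ) :=
  {x | (∀ e, 0 ≤ x e ∧ x e ≤ 1) ∧
       (∀ S : Finset V, S ⊆ VS → S.Nonempty → S ≠ VS →
          1 ≤ outCut E x S ∧ 1 ≤ inCut E x S) ∧
       (∀ v ∈ VS, outCut E x {v} = inCut E x {v})}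

/-- Indicator vectors of Hamiltonian cycles (on node set `VS`) among edges `E`. -/
def hamCycleVecs (VS : Finset V) (E : Finset (V × V)) : Set (↥E → ℝ) :=
  {x | ∃ c : List V, 2 ≤ c.length ∧ c.Nodup ∧ c.toFinset = VS ∧
        (∀ a ∈ cycSteps c, a ∈ E) ∧
        ∀ e : ↥E, x e = if e.val ∈ cycSteps c then 1 else 0}

/-- Edge set of the complete directed graph on the node set `VS` (no self-loops). -/
def dComplete (VS : Finset V) : Finset (V × V) := (VS ×ˢ VS).filter (fun e => e.1 ≠ e.2)

/-- Edge set of the complete directed graph on all of `V` (no self-loops). -/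
def dCompleteAll (V : Type*) [Fintype V] [DecidableEq V] : Finset (V × V) :=
  Finset.univ.filter (fun e => e.1 ≠ e.2)

/-- Out-degree of `v` in edge set `E`. -/
def outDeg (E : Finset (V × V)) (v : V) : ℕ := (E.filter (fun e => e.1 = v)).card

/-- In-degree of `v` in edge set `E`. -/
def inDeg (E : Finset (V × V)) (v : V) : ℕ := (E.filter (fun e => e.2 = v)).card

/-- A frame for the edge `e = (u,v)`: a set `F ⊆ E \ {e}` consisting of an edge-simple
path from `u` to `v` together with zero or more edge-simple cycles, all pairwise
edge-disjoint. -/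
def IsFrame (E : Finset (V × V)) (e : V × V) (F : Finset (V × V)) : Prop :=
  F ⊆ E.erase e ∧
  ∃ (p : List V) (cs : List (List V)),
    p.head? = some e.1 ∧ p.getLast? = some e.2 ∧ (∀ a ∈ dSteps p, a ∈ E) ∧
    (∀ c ∈ cs, c ≠ [] ∧ ∀ a ∈ cycSteps c, a ∈ E) ∧
    (dSteps p ++ (cs.map cycSteps).flatten).Nodup ∧
    F = (dSteps p ++ (cs.map cycSteps).flatten).toFinset

/-- There exist two edge-disjoint directed (simple) paths from `u` to `v` in `E`. -/
def TwoEdgeDisjointPaths (E : Finset (V × V)) (u v : V) : Prop :=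
  ∃ p q : List V, p.Nodup ∧ q.Nodup ∧
    p.head? = some u ∧ p.getLast? = some v ∧
    q.head? = some u ∧ q.getLast? = some v ∧
    (∀ a ∈ dSteps p, a ∈ E) ∧ (∀ a ∈ dSteps q, a ∈ E) ∧
    (dSteps p).Disjoint (dSteps q)




/-! ### The Charikar–Goemans–Karloff graphs -/

/-- Vertex type housing the graph `G_{k,r}` (index `k = 0` is a dummy level). -/
def CGKV : ℕ → Type
  | 0 => PUnit
  | 1 => ℕ
  | k + 2 => (ℕ × CGKV (k + 1)) ⊕ Fin 2

instance CGKV.decEq : (k : ℕ) → DecidableEq (CGKV k)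
  | 0 => inferInstanceAs (DecidableEq PUnit)
  | 1 => inferInstanceAs (DecidableEq ℕ)
  | k + 2 =>
      letI : DecidableEq (CGKV (k + 1)) := CGKV.decEq (k + 1)
      inferInstanceAs (DecidableEq ((ℕ × CGKV (k + 1)) ⊕ Fin 2))

/-- The source of `G_{k,r}`. -/
def CGKsrc (r : ℕ) : (k : ℕ) → CGKV k
  | 0 => PUnit.unit
  | 1 => (0 : ℕ)
  | _ + 2 => Sum.inr 0

/-- The sink of `G_{k,r}`. -/
def CGKsnk (r : ℕ) : (k : ℕ) → CGKV k
  | 0 => PUnit.unit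
  | 1 => (r + 1 : ℕ)
  | _ + 2 => Sum.inr 1

/-- The node set of `G_{k,r}`. -/
def CGKVS (r : ℕ) : (k : ℕ) → Finset (CGKV k)
  | 0 => ∅
  | 1 => Finset.range (r + 2)
  | k + 2 =>
      ((Finset.range r) ×ˢ CGKVS r (k + 1)).image Sum.inl ∪ {Sum.inr 0, Sum.inr 1}

/-- The edge set of `G_{k,r}`: at level 1, two oppositely-directed paths of `r+1` edges
on the nodes `0, …, r+1`; at level `k+2`, the edges of the `r` copies of `G_{k+1,r}`
together with a path from the source `s` through the copies' sources to the sink `t`,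
and a path from `t` through the copies' sinks (in the opposite order) back to `s`. -/
def CGKE (r : ℕ) : (k : ℕ) → Finset (CGKV k × CGKV k)
  | 0 => ∅
  | 1 => (dSteps (List.range (r + 2))).toFinset ∪
         (dSteps (List.range (r + 2)).reverse).toFinset
  | k + 2 =>
      (Finset.range r).biUnion
        (fun j => (CGKE r (k + 1)).image (fun e => (Sum.inl (j, e.1), Sum.inl (j, e.2)))) ∪
      (dSteps (Sum.inr 0 ::
        ((List.range r).map (fun j => Sum.inl (j, CGKsrc r (k + 1)))) ++ [Sum.inr 1])).toFinset ∪
      (dSteps (Sum.inr 1 ::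
        (((List.range r).map (fun j => Sum.inl (j, CGKsnk r (k + 1)))).reverse) ++ [Sum.inr 0])).toFinset

/-- Edge weights of `G_{k,r}` (and of `L_{k,r}`): level-`ℓ` edges have weight `r^(ℓ-1)`. -/
def CGKw (r : ℕ) : (k : ℕ) → CGKV k × CGKV k → ℝ
  | 0, _ => 0
  | 1, _ => 1
  | k + 2, e =>
      match e with
      | (Sum.inl (j, u), Sum.inl (j', v)) =>
          if j = j' then CGKw r (k + 1) (u, v) else (r : ℝ) ^ (k + 1)
      | _ => (r : ℝ) ^ (k + 1)

/-- `v₁`: the successor of `s` on the forward path of `G_{k,r}`. -/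
def Lv1 (r : ℕ) : (k : ℕ) → CGKV k
  | 0 => PUnit.unit
  | 1 => (1 : ℕ)
  | k + 2 => Sum.inl (0, CGKsrc r (k + 1))

/-- `v₂`: the predecessor of `t` on the forward path of `G_{k,r}`. -/
def Lv2 (r : ℕ) : (k : ℕ) → CGKV k
  | 0 => PUnit.unit
  | 1 => (r : ℕ)
  | k + 2 => Sum.inl (r - 1, CGKsrc r (k + 1))

/-- `v₃`: the successor of `t` on the backward path of `G_{k,r}`. -/
def Lv3 (r : ℕ) : (k : ℕ) → CGKV k
  | 0 => PUnit.unit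
  | 1 => (r : ℕ)
  | k + 2 => Sum.inl (r - 1, CGKsnk r (k + 1))

/-- `v₄`: the predecessor of `s` on the backward path of `G_{k,r}`. -/
def Lv4 (r : ℕ) : (k : ℕ) → CGKV k
  | 0 => PUnit.unit
  | 1 => (1 : ℕ)
  | k + 2 => Sum.inl (0, CGKsnk r (k + 1))

/-- The node set `V_{k,r}` of `L_{k,r}`: the nodes of `G_{k,r}` minus the two terminals. -/
def LVS (r k : ℕ) : Finset (CGKV k) :=
  ((CGKVS r k).erase (CGKsrc r k)).erase (CGKsnk r k)

/-- The edge set `E_{k,r}` of `L_{k,r}`: the edges of `G_{k,r}` not incident to a terminal,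
plus the two new edges `(v₂,v₁)` and `(v₄,v₃)`. -/
def LE (r k : ℕ) : Finset (CGKV k × CGKV k) :=
  (CGKE r k).filter (fun e =>
    e.1 ≠ CGKsrc r k ∧ e.1 ≠ CGKsnk r k ∧ e.2 ≠ CGKsrc r k ∧ e.2 ≠ CGKsnk r k) ∪
  {(Lv2 r k, Lv1 r k), (Lv4 r k, Lv3 r k)}



/-! ### Undirected graphs -/

variable {V : Type*} [DecidableEq V]

/-- The (undirected) steps of a walk given by its list of vertices. -/
def uSteps (l : List V) : List (Sym2 V) := (l.zip l.tail).map (fun p => Sym2.mk p.1 p.2)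

/-- `l` is a walk from `u` to `v` in the undirected edge set `E`. -/
def IsUWalk (E : Finset (Sym2 V)) (u v : V) (l : List V) : Prop :=
  l.head? = some u ∧ l.getLast? = some v ∧ ∀ e ∈ uSteps l, e ∈ E

/-- Whether the undirected edge `e` crosses the cut `(S, S̄)`. -/
def uCrosses (S : Finset V) (e : Sym2 V) : Bool :=
  Sym2.lift ⟨fun a b => xor (decide (a ∈ S)) (decide (b ∈ S)),
    fun a b => Bool.xor_comm _ _⟩ e

/-- `x(δ(S))`. -/
def uCut (E : Finset (Sym2 V)) (x : ↥E → ℝ) (S : Finset V) : ℝ :=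
  ∑ e ∈ E.attach.filter (fun e => uCrosses S e.val), x e

/-- `d · x = ∑_e d_e x_e` over the undirected edge set `E`. -/
def uDot (E : Finset (Sym2 V)) (d : Sym2 V → ℝ) (x : ↥E → ℝ) : ℝ :=
  ∑ e ∈ E.attach, d e.val * x e

/-- The symmetric tour polytope of the undirected graph with node set `VS`, edges `E`. -/
def STpoly (VS : Finset V) (E : Finset (Sym2 V)) : Set (↥E → ℝ) :=
  {x | (∀ e, 0 ≤ x e ∧ x e ≤ 1) ∧
       (∀ S : Finset V, S ⊆ VS → S.Nonempty → S ≠ VS → 2 ≤ uCut E x S) ∧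
       (∀ v ∈ VS, uCut E x {v} = 2)}

/-- The symmetric path polytope of the undirected graph with node set `VS`, edges `E`,
and endpoints `s`, `t`. -/
def SPpoly (VS : Finset V) (E : Finset (Sym2 V)) (s t : V) : Set (↥E → ℝ) :=
  {x | (∀ e, 0 ≤ x e ∧ x e ≤ 1) ∧
       (∀ S : Finset V, S ⊆ VS → S.Nonempty → S ≠ VS →
          (((s ∈ S) ↔ (t ∈ S)) → 2 ≤ uCut E x S) ∧
          (¬((s ∈ S) ↔ (t ∈ S)) → 1 ≤ uCut E x S)) ∧
       (∀ v ∈ VS, v ≠ s → v ≠ t → uCut E x {v} = 2) ∧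
       uCut E x {s} = 1 ∧ uCut E x {t} = 1}

/-- Indicator vectors of Hamiltonian paths from `s` to `t` (on node set `VS`) among
edges `E`. -/
def uHamPathVecs (VS : Finset V) (E : Finset (Sym2 V)) (s t : V) : Set (↥E → ℝ) :=
  {x | ∃ p : List V, p.Nodup ∧ p.toFinset = VS ∧
        p.head? = some s ∧ p.getLast? = some t ∧
        (∀ e ∈ uSteps p, e ∈ E) ∧
        ∀ e : ↥E, x e = if e.val ∈ uSteps p then 1 else 0}

/-- Edge set of the complete undirected graph on all of `V` (no self-loops). -/
def uCompleteAll (V : Type*) [Fintype V] [DecidableEq V] : Finset (Sym2 V) :=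
  Finset.univ.filter (fun e => ¬ e.IsDiag)

/-- Shortest-path distance (number of edges) between the endpoints of `e`, in the
unweighted undirected graph with edge set `E`. -/
noncomputable def uDist (E : Finset (Sym2 V)) (e : Sym2 V) : ℝ :=
  sInf {c | ∃ u v : V, e = s(u, v) ∧
    ∃ l : List V, IsUWalk E u v l ∧ ((uSteps l).length : ℝ) = c}

/-! ### Cheung's graphs -/

/-- The node set `V_{ℓ,q}` of Cheung's graph `G_{ℓ,q}`: a top path and a bottom path of
`ℓ+1` nodes each, a left and a right clique of `3q+3` nodes each, and nodes `s`, `t`. -/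
inductive ChV (l q : ℕ) where
  | top : Fin (l + 1) → ChV l q
  | bot : Fin (l + 1) → ChV l q
  | left : Fin (3 * q + 3) → ChV l q
  | right : Fin (3 * q + 3) → ChV l q
  | vs : ChV l q
  | vt : ChV l q
deriving DecidableEq, Fintype

/-- The edges of the two paths of `G_{ℓ,q}`. -/
def ChEpaths (l q : ℕ) : Finset (Sym2 (ChV l q)) :=
  (Finset.univ : Finset (Fin l)).image
    (fun i => s(ChV.top i.castSucc, ChV.top i.succ)) ∪
  (Finset.univ : Finset (Fin l)).image
    (fun i => s(ChV.bot i.castSucc, ChV.bot i.succ))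

/-- The edges within the two cliques of `G_{ℓ,q}`. -/
def ChEcliques (l q : ℕ) : Finset (Sym2 (ChV l q)) :=
  ((Finset.univ : Finset (Fin (3 * q + 3) × Fin (3 * q + 3))).filter
      (fun p => p.1 ≠ p.2)).image (fun p => s(ChV.left p.1, ChV.left p.2)) ∪
  ((Finset.univ : Finset (Fin (3 * q + 3) × Fin (3 * q + 3))).filter
      (fun p => p.1 ≠ p.2)).image (fun p => s(ChV.right p.1, ChV.right p.2))

/-- The connection edges of `G_{ℓ,q}`: path endpoints to the cliques, `s` to the left
clique, and `t` to the right clique. -/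
def ChEconn (l q : ℕ) : Finset (Sym2 (ChV l q)) :=
  (Finset.univ : Finset (Fin (3 * q + 3))).image (fun i => s(ChV.top 0, ChV.left i)) ∪
  (Finset.univ : Finset (Fin (3 * q + 3))).image (fun i => s(ChV.bot 0, ChV.left i)) ∪
  (Finset.univ : Finset (Fin (3 * q + 3))).image
    (fun i => s(ChV.top (Fin.last l), ChV.right i)) ∪
  (Finset.univ : Finset (Fin (3 * q + 3))).image
    (fun i => s(ChV.bot (Fin.last l), ChV.right i)) ∪
  (Finset.univ : Finset (Fin (3 * q + 3))).image (fun i => s(ChV.vs, ChV.left i)) ∪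
  (Finset.univ : Finset (Fin (3 * q + 3))).image (fun i => s(ChV.vt, ChV.right i))

/-- The edge set `E_{ℓ,q}` of Cheung's graph `G_{ℓ,q}`. -/
def ChE (l q : ℕ) : Finset (Sym2 (ChV l q)) :=
  ChEpaths l q ∪ ChEcliques l q ∪ ChEconn l q

/-- The node set of `G'_{ℓ,q}`: `G_{ℓ,q}` plus `ℓ-1` new internal path nodes. -/
inductive ChV' (l q : ℕ) where
  | old : ChV l q → ChV' l q
  | mid : Fin (l - 1) → ChV' l q
deriving DecidableEq, Fintype

/-- The new `s`–`t` path of `G'_{ℓ,q}` (as a list of nodes; it has `ℓ` edges). -/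
def ChPathList (l q : ℕ) : List (ChV' l q) :=
  ChV'.old ChV.vs :: ((List.finRange (l - 1)).map ChV'.mid ++ [ChV'.old ChV.vt])

/-- The edge set `E'_{ℓ,q}` of `G'_{ℓ,q}`: the (old) edges of `G_{ℓ,q}` together with the
`ℓ` new edges of a path from `s` to `t` through `ℓ-1` new nodes. -/
def ChE' (l q : ℕ) : Finset (Sym2 (ChV' l q)) :=
  (ChE l q).image (Sym2.map ChV'.old) ∪ (uSteps (ChPathList l q)).toFinset



/-! ### Auxiliary lemmas for statement 15 -/

section Stmt15Aux

variable {α : Type*}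

lemma countP_or_disj (p q : α → Bool) (l : List α) (h : ∀ x ∈ l, ¬(p x = true ∧ q x = true)) :
    l.countP (fun x => p x || q x) = l.countP p + l.countP q := by
  induction l with
  | nil => simp
  | cons a l ih =>
    simp only [List.countP_cons]
    rw [ih (fun x hx => h x (List.mem_cons_of_mem _ hx))]
    have := h a List.mem_cons_self
    cases hp : p a <;> cases hq : q a <;> simp_all <;> omega

lemma cross_parity_aux (P : α → Bool) :
    ∀ (l : List α) (a : α),
      (List.countP (fun p : α × α => P p.1 != P p.2) ((a :: l).zip l)) % 2
        = if P a = P ((a :: l).getLast (List.cons_ne_nil a l)) then 0 else 1 := by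
  intro l
  induction l with
  | nil => intro a; simp
  | cons b l ih =>
    intro a
    have hz : (a :: b :: l).zip (b :: l) = (a, b) :: ((b :: l).zip l) := rfl
    rw [hz, List.countP_cons]
    have hgl : (a :: b :: l).getLast (List.cons_ne_nil _ _)
        = (b :: l).getLast (List.cons_ne_nil b l) := List.getLast_cons _
    rw [hgl]
    have hih := ih b
    cases hA : P a <;> cases hB : P b <;>
      cases hL : P ((b :: l).getLast (List.cons_ne_nil b l)) <;>
      simp [hA, hB, hL] at hih ⊢ <;> omega

lemma no_cross_const (P : α → Bool) :
    ∀ (l : List α) (a : α),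
      (List.countP (fun p : α × α => P p.1 != P p.2) ((a :: l).zip l)) = 0 →
      ∀ v ∈ a :: l, P v = P a := by
  intro l
  induction l with
  | nil => intro a _ v hv; simp at hv; subst hv; rfl
  | cons b l ih =>
    intro a h v hv
    have hz : (a :: b :: l).zip (b :: l) = (a, b) :: ((b :: l).zip l) := rfl
    rw [hz, List.countP_cons] at h
    have h1 : (List.countP (fun p : α × α => P p.1 != P p.2) ((b :: l).zip l)) = 0 := by omega
    have h2 : P a = P b := by
      by_contra hne
      simp [bne_iff_ne, hne] at h
    rcases List.mem_cons.1 hv with rfl | hv'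
    · rfl
    · rw [ih b h1 v hv', h2]

end Stmt15Aux

/-- Indicator for the middle segment of the top path between positions `i` and `j`. -/
def P1seg (l q i j : ℕ) : ChV l q → Bool
  | .top m => decide (i < m.val ∧ m.val ≤ j)
  | _ => false

/-- Indicator for the middle segment of the bottom path between positions `i` and `j`. -/
def P2seg (l q i j : ℕ) : ChV l q → Bool
  | .bot m => decide (i < m.val ∧ m.val ≤ j)
  | _ => false

/-- Indicator for the "right side" cut separating `s` from `t`. -/
def P3cut (l q i i' : ℕ) : ChV l q → Bool
  | .top m => decide (i < m.val)
  | .bot m => decide (i' < m.val)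
  | .right _ => true
  | .vt => true
  | _ => false

lemma mem_ChE_cases {l q : ℕ} {e : Sym2 (ChV l q)} (he : e ∈ ChE l q) :
    (∃ c : Fin l, e = s(ChV.top c.castSucc, ChV.top c.succ)) ∨
    (∃ c : Fin l, e = s(ChV.bot c.castSucc, ChV.bot c.succ)) ∨
    (∃ a b : Fin (3*q+3), e = s(ChV.left a, ChV.left b)) ∨
    (∃ a b : Fin (3*q+3), e = s(ChV.right a, ChV.right b)) ∨
    (∃ a, e = s(ChV.top 0, ChV.left a)) ∨
    (∃ a, e = s(ChV.bot 0, ChV.left a)) ∨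
    (∃ a, e = s(ChV.top (Fin.last l), ChV.right a)) ∨
    (∃ a, e = s(ChV.bot (Fin.last l), ChV.right a)) ∨
    (∃ a, e = s(ChV.vs, ChV.left a)) ∨
    (∃ a, e = s(ChV.vt, ChV.right a)) := by
  simp only [ChE, ChEpaths, ChEcliques, ChEconn, Finset.mem_union, Finset.mem_image,
    Finset.mem_filter, Finset.mem_univ, true_and, Prod.exists, eq_comm] at he
  aesop


lemma P1seg_cross {l q : ℕ} (i j : Fin l) (hij : (i : ℕ) < (j : ℕ)) {x y : ChV l q}
    (hmem : s(x, y) ∈ ChE l q) (hx : P1seg l q i j x ≠ P1seg l q i j y) :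
    s(x, y) = s(ChV.top i.castSucc, ChV.top i.succ) ∨
    s(x, y) = s(ChV.top j.castSucc, ChV.top j.succ) := by
  have hjl : (j : ℕ) < l := j.isLt
  rcases mem_ChE_cases hmem with ⟨c, hc⟩ | ⟨c, hc⟩ | ⟨a, b, hc⟩ | ⟨a, b, hc⟩ | ⟨a, hc⟩ |
    ⟨a, hc⟩ | ⟨a, hc⟩ | ⟨a, hc⟩ | ⟨a, hc⟩ | ⟨a, hc⟩
  · have hc0 := hc
    rw [Sym2.eq_iff] at hc0
    have hcl : (c : ℕ) < l := c.isLt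
    have key : (c : ℕ) = (i : ℕ) ∨ (c : ℕ) = (j : ℕ) := by
      rcases hc0 with ⟨rfl, rfl⟩ | ⟨rfl, rfl⟩ <;>
      · simp only [P1seg, Fin.coe_castSucc, Fin.val_succ, ne_eq, decide_eq_decide] at hx
        omega
    rcases key with h | h
    · left; rw [hc, show c = i from Fin.ext h]
    · right; rw [hc, show c = j from Fin.ext h]
  all_goals exfalso; rw [Sym2.eq_iff] at hc
  all_goals rcases hc with ⟨rfl, rfl⟩ | ⟨rfl, rfl⟩ <;>
    simp [P1seg, Fin.val_last] at hx <;> omega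

lemma P2seg_cross {l q : ℕ} (i j : Fin l) (hij : (i : ℕ) < (j : ℕ)) {x y : ChV l q}
    (hmem : s(x, y) ∈ ChE l q) (hx : P2seg l q i j x ≠ P2seg l q i j y) :
    s(x, y) = s(ChV.bot i.castSucc, ChV.bot i.succ) ∨
    s(x, y) = s(ChV.bot j.castSucc, ChV.bot j.succ) := by
  have hjl : (j : ℕ) < l := j.isLt
  rcases mem_ChE_cases hmem with ⟨c, hc⟩ | ⟨c, hc⟩ | ⟨a, b, hc⟩ | ⟨a, b, hc⟩ | ⟨a, hc⟩ |
    ⟨a, hc⟩ | ⟨a, hc⟩ | ⟨a, hc⟩ | ⟨a, hc⟩ | ⟨a, hc⟩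
  case inr.inl =>
    have hc0 := hc
    rw [Sym2.eq_iff] at hc0
    have hcl : (c : ℕ) < l := c.isLt
    have key : (c : ℕ) = (i : ℕ) ∨ (c : ℕ) = (j : ℕ) := by
      rcases hc0 with ⟨rfl, rfl⟩ | ⟨rfl, rfl⟩ <;>
      · simp only [P2seg, Fin.coe_castSucc, Fin.val_succ, ne_eq, decide_eq_decide] at hx
        omega
    rcases key with h | h
    · left; rw [hc, show c = i from Fin.ext h]
    · right; rw [hc, show c = j from Fin.ext h]
  all_goals exfalso; rw [Sym2.eq_iff] at hc
  all_goals rcases hc with ⟨rfl, rfl⟩ | ⟨rfl, rfl⟩ <;>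
    simp [P2seg, Fin.val_last] at hx <;> omega

lemma P3cut_cross {l q : ℕ} (i i' : Fin l) {x y : ChV l q}
    (hmem : s(x, y) ∈ ChE l q) (hx : P3cut l q i i' x ≠ P3cut l q i i' y) :
    s(x, y) = s(ChV.top i.castSucc, ChV.top i.succ) ∨
    s(x, y) = s(ChV.bot i'.castSucc, ChV.bot i'.succ) := by
  have hil : (i : ℕ) < l := i.isLt
  have hil' : (i' : ℕ) < l := i'.isLt
  rcases mem_ChE_cases hmem with ⟨c, hc⟩ | ⟨c, hc⟩ | ⟨a, b, hc⟩ | ⟨a, b, hc⟩ | ⟨a, hc⟩ |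
    ⟨a, hc⟩ | ⟨a, hc⟩ | ⟨a, hc⟩ | ⟨a, hc⟩ | ⟨a, hc⟩
  · have hc0 := hc
    rw [Sym2.eq_iff] at hc0
    have key : (c : ℕ) = (i : ℕ) := by
      rcases hc0 with ⟨rfl, rfl⟩ | ⟨rfl, rfl⟩ <;>
      · simp only [P3cut, Fin.coe_castSucc, Fin.val_succ, ne_eq, decide_eq_decide] at hx
        omega
    left; rw [hc, show c = i from Fin.ext key]
  · have hc0 := hc
    rw [Sym2.eq_iff] at hc0
    have key : (c : ℕ) = (i' : ℕ) := by
      rcases hc0 with ⟨rfl, rfl⟩ | ⟨rfl, rfl⟩ <;>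
      · simp only [P3cut, Fin.coe_castSucc, Fin.val_succ, ne_eq, decide_eq_decide] at hx
        omega
    right; rw [hc, show c = i' from Fin.ext key]
  all_goals exfalso; rw [Sym2.eq_iff] at hc
  all_goals rcases hc with ⟨rfl, rfl⟩ | ⟨rfl, rfl⟩ <;>
    simp [P3cut, Fin.val_last] at hx <;> omega


lemma count_uSteps_eq {l q : ℕ} (W : List (ChV l q)) (e : Sym2 (ChV l q)) :
    (uSteps W).count e
      = List.countP (fun p : ChV l q × ChV l q => Sym2.mk p.1 p.2 == e) (W.zip W.tail) := by
  rw [uSteps, List.count, List.countP_map]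
  rfl

lemma cross_count_eq {l q : ℕ} (W : List (ChV l q)) (P : ChV l q → Bool)
    (hmem : ∀ p ∈ W.zip W.tail, Sym2.mk p.1 p.2 ∈ ChE l q)
    (e1 e2 : Sym2 (ChV l q)) (hne : e1 ≠ e2)
    (hchar : ∀ p ∈ W.zip W.tail, Sym2.mk p.1 p.2 ∈ ChE l q → (P p.1 ≠ P p.2) →
        Sym2.mk p.1 p.2 = e1 ∨ Sym2.mk p.1 p.2 = e2)
    (hback : ∀ p : ChV l q × ChV l q, Sym2.mk p.1 p.2 = e1 ∨ Sym2.mk p.1 p.2 = e2 → P p.1 ≠ P p.2) :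
    List.countP (fun p : ChV l q × ChV l q => P p.1 != P p.2) (W.zip W.tail)
      = (uSteps W).count e1 + (uSteps W).count e2 := by
  rw [count_uSteps_eq, count_uSteps_eq]
  rw [← countP_or_disj (fun p : ChV l q × ChV l q => Sym2.mk p.1 p.2 == e1)
      (fun p => Sym2.mk p.1 p.2 == e2) _ ?disj]
  case disj =>
    intro p _ ⟨h1, h2⟩
    rw [beq_iff_eq] at h1 h2
    exact hne (h1 ▸ h2)
  refine List.countP_congr (fun p hp => ?_)
  simp only [bne_iff_ne, ne_eq, Bool.or_eq_true, beq_iff_eq]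
  constructor
  · exact fun h => hchar p hp (hmem p hp) h
  · exact fun h => hback p h


lemma P1seg_cross_at {l q : ℕ} (i j c : Fin l) (hij : (i : ℕ) < (j : ℕ)) (hc : c = i ∨ c = j) :
    P1seg l q i j (ChV.top c.castSucc) ≠ P1seg l q i j (ChV.top c.succ) := by
  rcases hc with rfl | rfl <;>
    simp only [P1seg, Fin.coe_castSucc, Fin.val_succ, ne_eq, decide_eq_decide] <;> omega

lemma P2seg_cross_at {l q : ℕ} (i j c : Fin l) (hij : (i : ℕ) < (j : ℕ)) (hc : c = i ∨ c = j) :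
    P2seg l q i j (ChV.bot c.castSucc) ≠ P2seg l q i j (ChV.bot c.succ) := by
  rcases hc with rfl | rfl <;>
    simp only [P2seg, Fin.coe_castSucc, Fin.val_succ, ne_eq, decide_eq_decide] <;> omega

lemma P3cut_cross_at_top {l q : ℕ} (i i' : Fin l) :
    P3cut l q i i' (ChV.top i.castSucc) ≠ P3cut l q i i' (ChV.top i.succ) := by
  simp only [P3cut, Fin.coe_castSucc, Fin.val_succ, ne_eq, decide_eq_decide]; omega

lemma P3cut_cross_at_bot {l q : ℕ} (i i' : Fin l) :
    P3cut l q i i' (ChV.bot i'.castSucc) ≠ P3cut l q i i' (ChV.bot i'.succ) := by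
  simp only [P3cut, Fin.coe_castSucc, Fin.val_succ, ne_eq, decide_eq_decide]; omega

lemma stmt15_key {l q : ℕ} (W : List (ChV l q))
    (hW : IsUWalk (ChE l q) ChV.vs ChV.vt W)
    (hvisit : ∀ v : ChV l q, v ∈ W) (i j i' j' : Fin l)
    (hij : (i : ℕ) < (j : ℕ)) (hij' : (i' : ℕ) < (j' : ℕ))
    (h1 : (uSteps W).count s(ChV.top i.castSucc, ChV.top i.succ) ≤ 1)
    (h2 : (uSteps W).count s(ChV.top j.castSucc, ChV.top j.succ) ≤ 1)
    (h3 : (uSteps W).count s(ChV.bot i'.castSucc, ChV.bot i'.succ) ≤ 1)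
    (h4 : (uSteps W).count s(ChV.bot j'.castSucc, ChV.bot j'.succ) ≤ 1) : False := by
  obtain ⟨hhead, hlast, hE⟩ := hW
  obtain ⟨rest, rfl⟩ : ∃ r, W = ChV.vs :: r := by
    cases W with
    | nil => simp at hhead
    | cons a r =>
      simp only [List.head?_cons, Option.some.injEq] at hhead
      exact ⟨r, by rw [hhead]⟩
  have hL : (ChV.vs :: rest).getLast (List.cons_ne_nil _ _) = ChV.vt := by
    rw [List.getLast?_eq_getLast (List.cons_ne_nil _ _)] at hlast
    exact Option.some.inj hlast
  have hmem : ∀ p ∈ (ChV.vs :: rest).zip rest, Sym2.mk p.1 p.2 ∈ ChE l q :=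
    fun p hp => hE _ (List.mem_map_of_mem hp)
  -- edge inequalities
  have hneT : (s(ChV.top i.castSucc, ChV.top i.succ) : Sym2 (ChV l q)) ≠ s(ChV.top j.castSucc, ChV.top j.succ) := by
    simp only [ne_eq, Sym2.eq_iff, ChV.top.injEq, Fin.ext_iff, Fin.coe_castSucc,
      Fin.val_succ]
    omega
  have hneB : (s(ChV.bot i'.castSucc, ChV.bot i'.succ) : Sym2 (ChV l q)) ≠ s(ChV.bot j'.castSucc, ChV.bot j'.succ) := by
    simp only [ne_eq, Sym2.eq_iff, ChV.bot.injEq, Fin.ext_iff, Fin.coe_castSucc,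
      Fin.val_succ]
    omega
  have hneTB : (s(ChV.top i.castSucc, ChV.top i.succ) : Sym2 (ChV l q)) ≠ s(ChV.bot i'.castSucc, ChV.bot i'.succ) := by
    simp [Sym2.eq_iff]
  -- the top middle-segment cut
  have hc1 : List.countP (fun p : ChV l q × ChV l q => P1seg l q i j p.1 != P1seg l q i j p.2)
      ((ChV.vs :: rest).zip rest)
      = (uSteps (ChV.vs :: rest)).count s(ChV.top i.castSucc, ChV.top i.succ)
        + (uSteps (ChV.vs :: rest)).count s(ChV.top j.castSucc, ChV.top j.succ) := by
    refine cross_count_eq _ _ hmem _ _ hneT ?_ ?_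
    · intro p _ hpE hcr
      obtain ⟨x, y⟩ := p
      exact P1seg_cross i j hij hpE hcr
    · rintro ⟨x, y⟩ h
      rcases h with h | h <;> rw [Sym2.eq_iff] at h <;>
        rcases h with ⟨rfl, rfl⟩ | ⟨rfl, rfl⟩
      · exact P1seg_cross_at i j i hij (Or.inl rfl)
      · exact (P1seg_cross_at i j i hij (Or.inl rfl)).symm
      · exact P1seg_cross_at i j j hij (Or.inr rfl)
      · exact (P1seg_cross_at i j j hij (Or.inr rfl)).symm
  have hpar1 := cross_parity_aux (P1seg l q i j) rest ChV.vs
  rw [hL] at hpar1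
  have hlb1 : List.countP (fun p : ChV l q × ChV l q => P1seg l q i j p.1 != P1seg l q i j p.2)
      ((ChV.vs :: rest).zip rest) ≠ 0 := by
    intro h0
    have := no_cross_const (P1seg l q i j) rest ChV.vs h0 (ChV.top i.succ)
      (hvisit (ChV.top i.succ))
    simp only [P1seg, Fin.val_succ] at this
    rw [decide_eq_false_iff_not] at this
    exact this ⟨Nat.lt_succ_self _, hij⟩
  have hP1s : P1seg l q i j ChV.vs = false := rfl
  have hP1t : P1seg l q i j ChV.vt = false := rfl
  rw [hP1s, hP1t, if_pos rfl] at hpar1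
  have htop : (uSteps (ChV.vs :: rest)).count s(ChV.top i.castSucc, ChV.top i.succ) = 1 ∧
      (uSteps (ChV.vs :: rest)).count s(ChV.top j.castSucc, ChV.top j.succ) = 1 := by
    rw [hc1] at hpar1 hlb1
    omega
  -- the bottom middle-segment cut
  have hc2 : List.countP (fun p : ChV l q × ChV l q => P2seg l q i' j' p.1 != P2seg l q i' j' p.2)
      ((ChV.vs :: rest).zip rest)
      = (uSteps (ChV.vs :: rest)).count s(ChV.bot i'.castSucc, ChV.bot i'.succ)
        + (uSteps (ChV.vs :: rest)).count s(ChV.bot j'.castSucc, ChV.bot j'.succ) := by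
    refine cross_count_eq _ _ hmem _ _ hneB ?_ ?_
    · intro p _ hpE hcr
      obtain ⟨x, y⟩ := p
      exact P2seg_cross i' j' hij' hpE hcr
    · rintro ⟨x, y⟩ h
      rcases h with h | h <;> rw [Sym2.eq_iff] at h <;>
        rcases h with ⟨rfl, rfl⟩ | ⟨rfl, rfl⟩
      · exact P2seg_cross_at i' j' i' hij' (Or.inl rfl)
      · exact (P2seg_cross_at i' j' i' hij' (Or.inl rfl)).symm
      · exact P2seg_cross_at i' j' j' hij' (Or.inr rfl)
      · exact (P2seg_cross_at i' j' j' hij' (Or.inr rfl)).symm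
  have hpar2 := cross_parity_aux (P2seg l q i' j') rest ChV.vs
  rw [hL] at hpar2
  have hlb2 : List.countP (fun p : ChV l q × ChV l q => P2seg l q i' j' p.1 != P2seg l q i' j' p.2)
      ((ChV.vs :: rest).zip rest) ≠ 0 := by
    intro h0
    have := no_cross_const (P2seg l q i' j') rest ChV.vs h0 (ChV.bot i'.succ)
      (hvisit (ChV.bot i'.succ))
    simp only [P2seg, Fin.val_succ] at this
    rw [decide_eq_false_iff_not] at this
    exact this ⟨Nat.lt_succ_self _, hij'⟩
  have hP2s : P2seg l q i' j' ChV.vs = false := rfl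
  have hP2t : P2seg l q i' j' ChV.vt = false := rfl
  rw [hP2s, hP2t, if_pos rfl] at hpar2
  have hbot : (uSteps (ChV.vs :: rest)).count s(ChV.bot i'.castSucc, ChV.bot i'.succ) = 1 ∧
      (uSteps (ChV.vs :: rest)).count s(ChV.bot j'.castSucc, ChV.bot j'.succ) = 1 := by
    rw [hc2] at hpar2 hlb2
    omega
  -- the s–t cut
  have hc3 : List.countP (fun p : ChV l q × ChV l q => P3cut l q i i' p.1 != P3cut l q i i' p.2)
      ((ChV.vs :: rest).zip rest)
      = (uSteps (ChV.vs :: rest)).count s(ChV.top i.castSucc, ChV.top i.succ)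
        + (uSteps (ChV.vs :: rest)).count s(ChV.bot i'.castSucc, ChV.bot i'.succ) := by
    refine cross_count_eq _ _ hmem _ _ hneTB ?_ ?_
    · intro p _ hpE hcr
      obtain ⟨x, y⟩ := p
      exact P3cut_cross i i' hpE hcr
    · rintro ⟨x, y⟩ h
      rcases h with h | h <;> rw [Sym2.eq_iff] at h <;>
        rcases h with ⟨rfl, rfl⟩ | ⟨rfl, rfl⟩
      · exact P3cut_cross_at_top i i'
      · exact (P3cut_cross_at_top i i').symm
      · exact P3cut_cross_at_bot i i'
      · exact (P3cut_cross_at_bot i i').symm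
  have hpar3 := cross_parity_aux (P3cut l q i i') rest ChV.vs
  rw [hL] at hpar3
  have hP3s : P3cut l q i i' ChV.vs = false := rfl
  have hP3t : P3cut l q i i' ChV.vt = true := rfl
  rw [hP3s, hP3t, if_neg (by simp)] at hpar3
  rw [hc3, htop.1, hbot.1] at hpar3
  simp at hpar3

theorem stmt15 (l q : ℕ) (hl : 1 ≤ l) (W : List (ChV l q))
    (hW : IsUWalk (ChE l q) ChV.vs ChV.vt W)
    (hvisit : ∀ v : ChV l q, v ∈ W) :
    ¬ ∃ i j i' j' : Fin l, i ≠ j ∧ i' ≠ j' ∧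
      (uSteps W).count s(ChV.top i.castSucc, ChV.top i.succ) ≤ 1 ∧
      (uSteps W).count s(ChV.top j.castSucc, ChV.top j.succ) ≤ 1 ∧
      (uSteps W).count s(ChV.bot i'.castSucc, ChV.bot i'.succ) ≤ 1 ∧
      (uSteps W).count s(ChV.bot j'.castSucc, ChV.bot j'.succ) ≤ 1 := by
  rintro ⟨i, j, i', j', hij, hij', h1, h2, h3, h4⟩
  have hij2 : (i : ℕ) ≠ (j : ℕ) := fun h => hij (Fin.ext h)
  have hij2' : (i' : ℕ) ≠ (j' : ℕ) := fun h => hij' (Fin.ext h)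
  rcases hij2.lt_or_gt with h | h <;> rcases hij2'.lt_or_gt with h' | h'
  · exact stmt15_key W hW hvisit i j i' j' h h' h1 h2 h3 h4
  · exact stmt15_key W hW hvisit i j j' i' h h' h1 h2 h4 h3
  · exact stmt15_key W hW hvisit j i i' j' h h' h2 h1 h3 h4
  · exact stmt15_key W hW hvisit j i j' i' h h' h2 h1 h4 h3

end TSPGap
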